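/- Let H₃(ℍ) be the hermitian 3×3 quaternionic matrices, and for X ∈ M₃(ℍ) define ρ(X) : H₃(ℍ) → H₃(ℍ) by ρ(X)(H) = X*H + H*Xᴴ. Then: (i) ρ(X) does map hermitian matrices to hermitian matrices; (ii) ρ is an injective ℝ-linear map and ρ([X,Y]) = [ρ(X), ρ(Y)] for all X,Y ∈ M₃(ℍ), i.e. ρ is an injective homomorphism of real Lie algebras from M₃(ℍ) (commutator bracket) into the endomorphisms of H₃(ℍ) (commutator bracket); (iii) the image of ρ is exactly the Lie subalgebra of endomorphisms of H₃(ℍ) generated by the Jordan multiplication operators L_A : H ↦ A*H + H*A for A ∈ H₃(ℍ) (the structure algebra of H₃(ℍ)); and (iv) this structure algebra is the internal direct sum of ℝ·id and ρ(sl(3,ℍ)), where sl(3,ℍ) = {X ∈ M₃(ℍ) : Re(tr X) = 0}. In particular the structure algebra of H₃(ℍ) is isomorphic to gl(3,ℍ), and its quotient by its centre is isomorphic to sl(3,ℍ). -/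

import Mathlib

open Matrix Quaternion

instance : StarModule ℝ ℍ[ℝ] := ⟨fun r q => by ext <;> simp⟩

attribute [local instance 100] LieRing.ofAssociativeRing

/-- The real vector space `H₃(ℍ)` of hermitian 3×3 quaternionic matrices. -/
noncomputable def herm3H : Submodule ℝ (Matrix (Fin 3) (Fin 3) ℍ[ℝ]) where
  carrier := {H | Hᴴ = H}
  add_mem' := by
    intro a b ha hb
    simp only [Set.mem_setOf_eq] at *
    rw [conjTranspose_add, ha, hb]
  zero_mem' := by simp [Set.mem_setOf_eq]
  smul_mem' := by
    intro r H hH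
    simp only [Set.mem_setOf_eq] at *
    rw [conjTranspose_smul, hH, star_trivial]

/-- The map `ρ(X) : H ↦ XH + HXᴴ`, an endomorphism of `H₃(ℍ)`. -/
noncomputable def rho (X : Matrix (Fin 3) (Fin 3) ℍ[ℝ]) : Module.End ℝ herm3H where
  toFun H :=
    ⟨X * H.1 + H.1 * Xᴴ, by
      have hH : (H.1)ᴴ = H.1 := H.2
      show (X * H.1 + H.1 * Xᴴ)ᴴ = X * H.1 + H.1 * Xᴴ
      rw [conjTranspose_add, conjTranspose_mul, conjTranspose_mul,
        conjTranspose_conjTranspose, hH, add_comm]⟩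
  map_add' := by
    intro H K
    apply Subtype.ext
    simp only [Submodule.coe_add, mul_add, add_mul]
    abel
  map_smul' := by
    intro r H
    apply Subtype.ext
    simp only [RingHom.id_apply, SetLike.val_smul, mul_smul_comm, smul_mul_assoc,
      smul_add]

/-- The Jordan multiplication operator `L_A : H ↦ AH + HA` on `H₃(ℍ)`, for
`A ∈ H₃(ℍ)`. -/
noncomputable def Lop (A : herm3H) : Module.End ℝ herm3H where
  toFun H :=
    ⟨A.1 * H.1 + H.1 * A.1, by
      have hA : (A.1)ᴴ = A.1 := A.2
      have hH : (H.1)ᴴ = H.1 := H.2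
      show (A.1 * H.1 + H.1 * A.1)ᴴ = A.1 * H.1 + H.1 * A.1
      rw [conjTranspose_add, conjTranspose_mul, conjTranspose_mul, hA, hH, add_comm]⟩
  map_add' := by
    intro H K
    apply Subtype.ext
    simp only [Submodule.coe_add, mul_add, add_mul]
    abel
  map_smul' := by
    intro r H
    apply Subtype.ext
    simp only [RingHom.id_apply, SetLike.val_smul, mul_smul_comm, smul_mul_assoc,
      smul_add]

/-- The structure algebra of `H₃(ℍ)`: the Lie subalgebra of endomorphisms of `H₃(ℍ)`
(with commutator bracket) generated by the Jordan multiplication operators `L_A`. -/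
noncomputable def StrH3 : LieSubalgebra ℝ (Module.End ℝ herm3H) :=
  LieSubalgebra.lieSpan ℝ (Module.End ℝ herm3H) (Set.range Lop)
set_option synthInstance.maxHeartbeats 1000000
set_option maxHeartbeats 1000000
section Aux
abbrev M3 := Matrix (Fin 3) (Fin 3) ℍ[ℝ]

lemma rho_coe (X : M3) (H : herm3H) : ((rho X H : herm3H) : M3) = X * H.1 + H.1 * Xᴴ := rfl

lemma rho_add (X Y : M3) : rho (X + Y) = rho X + rho Y := by
  refine LinearMap.ext fun H => Subtype.ext ?_
  show (X + Y) * H.1 + H.1 * (X + Y)ᴴ = (X * H.1 + H.1 * Xᴴ) + (Y * H.1 + H.1 * Yᴴ)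
  rw [Matrix.conjTranspose_add]
  noncomm_ring

lemma rho_smul (r : ℝ) (X : M3) : rho (r • X) = r • rho X := by
  refine LinearMap.ext fun H => Subtype.ext ?_
  show (r • X) * H.1 + H.1 * (r • X)ᴴ = r • (X * H.1 + H.1 * Xᴴ)
  rw [Matrix.conjTranspose_smul, star_trivial, Matrix.smul_mul, Matrix.mul_smul, smul_add]

lemma rho_zero : rho 0 = 0 := by
  refine LinearMap.ext fun H => Subtype.ext ?_
  show (0 : M3) * H.1 + H.1 * (0 : M3)ᴴ = 0
  simp

lemma rho_bracket (X Y : M3) : rho (X * Y - Y * X) = rho X * rho Y - rho Y * rho X := by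
  refine LinearMap.ext fun H => Subtype.ext ?_
  show (X * Y - Y * X) * H.1 + H.1 * (X * Y - Y * X)ᴴ =
    (X * (Y * H.1 + H.1 * Yᴴ) + (Y * H.1 + H.1 * Yᴴ) * Xᴴ)
    - (Y * (X * H.1 + H.1 * Xᴴ) + (X * H.1 + H.1 * Xᴴ) * Yᴴ)
  rw [Matrix.conjTranspose_sub, Matrix.conjTranspose_mul, Matrix.conjTranspose_mul]
  noncomm_ring

end Aux
section Aux2
open Matrix

lemma sbm_conjT (i j : Fin 3) (u : ℍ[ℝ]) :
    (single i j u)ᴴ = single j i (star u) := by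
  refine Matrix.ext fun a b => ?_
  simp only [conjTranspose_apply, single, of_apply]
  by_cases h1 : i = b <;> by_cases h2 : j = a <;> simp [h1, h2]

lemma herm_pair (i j : Fin 3) (u : ℍ[ℝ]) :
    (single i j u + single j i (star u))ᴴ
      = single i j u + single j i (star u) := by
  rw [conjTranspose_add, sbm_conjT, sbm_conjT, star_star, add_comm]

lemma herm_diag (i : Fin 3) : (single i i (1:ℍ[ℝ]))ᴴ = single i i 1 := by
  rw [sbm_conjT]; norm_num

lemma quat_real_of_comm {q : ℍ[ℝ]} (h : ∀ u : ℍ[ℝ], q * u = u * q) :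
    q = (q.re : ℍ[ℝ]) := by
  have h1 := h ⟨0,1,0,0⟩
  have h2 := h ⟨0,0,1,0⟩
  rw [Quaternion.ext_iff] at h1 h2 ⊢
  simp only [Quaternion.re_mul (a := (⟨0,1,0,0⟩ : ℍ[ℝ])),
    Quaternion.imI_mul (a := (⟨0,1,0,0⟩ : ℍ[ℝ])),
    Quaternion.imJ_mul (a := (⟨0,1,0,0⟩ : ℍ[ℝ])),
    Quaternion.imK_mul (a := (⟨0,1,0,0⟩ : ℍ[ℝ])),
    Quaternion.re_mul (b := (⟨0,1,0,0⟩ : ℍ[ℝ])),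
    Quaternion.imI_mul (b := (⟨0,1,0,0⟩ : ℍ[ℝ])),
    Quaternion.imJ_mul (b := (⟨0,1,0,0⟩ : ℍ[ℝ])),
    Quaternion.imK_mul (b := (⟨0,1,0,0⟩ : ℍ[ℝ])),
    Quaternion.re_mul (a := (⟨0,0,1,0⟩ : ℍ[ℝ])),
    Quaternion.imI_mul (a := (⟨0,0,1,0⟩ : ℍ[ℝ])),
    Quaternion.imJ_mul (a := (⟨0,0,1,0⟩ : ℍ[ℝ])),
    Quaternion.imK_mul (a := (⟨0,0,1,0⟩ : ℍ[ℝ])),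
    Quaternion.re_mul (b := (⟨0,0,1,0⟩ : ℍ[ℝ])),
    Quaternion.imI_mul (b := (⟨0,0,1,0⟩ : ℍ[ℝ])),
    Quaternion.imJ_mul (b := (⟨0,0,1,0⟩ : ℍ[ℝ])),
    Quaternion.imK_mul (b := (⟨0,0,1,0⟩ : ℍ[ℝ]))] at h1 h2
  simp only [Quaternion.re_mul, Quaternion.imI_mul, Quaternion.imJ_mul, Quaternion.imK_mul,
    Quaternion.re_coe, Quaternion.imI_coe, Quaternion.imJ_coe, Quaternion.imK_coe] at h1 h2 ⊢
  obtain ⟨a1, b1, c1, d1⟩ := h1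
  obtain ⟨a2, b2, c2, d2⟩ := h2
  refine ⟨by trivial, ?_, ?_, ?_⟩ <;> nlinarith [a1, b1, c1, d1, a2, b2, c2, d2]

end Aux2
section Aux3
open Matrix

lemma rho_inj : Function.Injective rho := by
  intro X Y hXY
  have key : ∀ H : M3, Hᴴ = H → (X - Y) * H + H * (X - Y)ᴴ = 0 := by
    intro H hH
    have := congrArg Subtype.val (LinearMap.congr_fun hXY ⟨H, hH⟩)
    simp only [rho_coe] at this
    rw [conjTranspose_sub, sub_mul, mul_sub]
    rw [show X * H - Y * H + (H * Xᴴ - H * Yᴴ)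
      = (X * H + H * Xᴴ) - (Y * H + H * Yᴴ) by abel, this, sub_self]
  set Z : M3 := X - Y with hZdef
  have hZH : Zᴴ = -Z := by
    have := key 1 conjTranspose_one
    rw [mul_one, one_mul] at this
    linear_combination (norm := noncomm_ring) this
  have hcomm : ∀ H : M3, Hᴴ = H → Commute Z H := by
    intro H hH
    have := key H hH
    rw [hZH] at this
    unfold Commute SemiconjBy
    linear_combination (norm := noncomm_ring) this
  have hc : Pairwise fun i j : Fin 3 => Commute (single i j (1:ℍ[ℝ])) Z := by
    intro i j hij
    have h1 : Commute Z (single i i (1:ℍ[ℝ])) := hcomm _ (herm_diag i)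
    have h2 : Commute Z (single i j (1:ℍ[ℝ]) + single j i (1:ℍ[ℝ])) := by
      have := hcomm _ (herm_pair i j (1:ℍ[ℝ]))
      rwa [star_one] at this
    have h3 := (h1.mul_right h2).symm
    rw [mul_add, single_mul_single_same, single_mul_single_of_ne (h := hij), one_mul,
      add_zero] at h3
    exact h3
  obtain ⟨q, hq⟩ := mem_range_scalar_of_commute_single hc
  have hqc : ∀ u : ℍ[ℝ], q * u = u * q := by
    intro u
    have := hcomm _ (herm_pair 0 1 u)
    rw [← hq] at this
    have e := Matrix.ext_iff.mpr this.eq 0 1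
    simp only [scalar_apply, diagonal_mul, mul_diagonal] at e
    simpa using e
  have hqr : q = (q.re : ℍ[ℝ]) := quat_real_of_comm hqc
  have hq0 : q = 0 := by
    have := Matrix.ext_iff.mpr hZH 0 0
    rw [← hq] at this
    simp only [conjTranspose_apply, scalar_apply, diagonal_apply_eq, neg_apply] at this
    rw [hqr] at this ⊢
    rw [Quaternion.ext_iff] at this
    simp only [Quaternion.re_star, Quaternion.re_coe, Quaternion.re_neg] at this
    have : q.re = 0 := by simp only [Matrix.neg_apply, diagonal_apply_eq, Quaternion.re_neg, Quaternion.re_coe] at this; linarith [this.1]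
    rw [this]; exact Quaternion.coe_zero
  have : Z = 0 := by rw [← hq, hq0]; simp
  have := sub_eq_zero.mp this
  exact this

end Aux3
section Aux4
open Matrix

noncomputable def rhoRange : LieSubalgebra ℝ (Module.End ℝ herm3H) where
  carrier := Set.range rho
  add_mem' := by rintro - - ⟨X, rfl⟩ ⟨Y, rfl⟩; exact ⟨X + Y, rho_add X Y⟩
  zero_mem' := ⟨0, rho_zero⟩
  smul_mem' := by rintro r - ⟨X, rfl⟩; exact ⟨r • X, rho_smul r X⟩
  lie_mem' := by
    rintro - - ⟨X, rfl⟩ ⟨Y, rfl⟩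
    exact ⟨X * Y - Y * X, by rw [rho_bracket, Ring.lie_def]⟩

lemma Lop_eq_rho (A : herm3H) : Lop A = rho A.1 := by
  refine LinearMap.ext fun H => Subtype.ext ?_
  show A.1 * H.1 + H.1 * A.1 = A.1 * H.1 + H.1 * (A.1)ᴴ
  rw [A.2]

lemma str_le_range : StrH3 ≤ rhoRange := by
  rw [StrH3, LieSubalgebra.lieSpan_le]
  rintro - ⟨A, rfl⟩
  exact ⟨A.1, (Lop_eq_rho A).symm⟩

lemma herm_mem (X : M3) (hX : Xᴴ = X) : rho X ∈ StrH3 := by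
  have : rho X = Lop ⟨X, hX⟩ := (Lop_eq_rho ⟨X, hX⟩).symm
  rw [this]
  exact LieSubalgebra.subset_lieSpan ⟨_, rfl⟩

lemma comm_mem (A B : M3) (hA : Aᴴ = A) (hB : Bᴴ = B) : rho (A * B - B * A) ∈ StrH3 := by
  rw [rho_bracket]
  exact LieSubalgebra.lie_mem StrH3 (herm_mem A hA) (herm_mem B hB)

lemma add_mem' {X Y : M3} (hX : rho X ∈ StrH3) (hY : rho Y ∈ StrH3) :
    rho (X + Y) ∈ StrH3 := by rw [rho_add]; exact LieSubalgebra.add_mem _ hX hY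

lemma smul_mem' (r : ℝ) {X : M3} (hX : rho X ∈ StrH3) : rho (r • X) ∈ StrH3 := by
  rw [rho_smul]; exact LieSubalgebra.smul_mem _ r hX

end Aux4
section Aux5
open Matrix

noncomputable def qI : ℍ[ℝ] := ⟨0,1,0,0⟩
noncomputable def qJ : ℍ[ℝ] := ⟨0,0,1,0⟩
noncomputable def qK : ℍ[ℝ] := ⟨0,0,0,1⟩

lemma offdiag_mem (i j : Fin 3) (hij : i ≠ j) (u : ℍ[ℝ]) :
    rho (single i j u) ∈ StrH3 := by
  have h1 := herm_mem _ (herm_pair i j u)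
  have h2 := comm_mem (single i i 1) _ (herm_diag i) (herm_pair i j u)
  have h := smul_mem' ((1:ℝ)/2) (add_mem' h1 h2)
  have e : single i j u = ((1:ℝ)/2) •
      ((single i j u + single j i (star u)) +
        (single i i 1 * (single i j u + single j i (star u)) -
          (single i j u + single j i (star u)) * single i i 1)) := by
    rw [mul_add, add_mul, single_mul_single_same, one_mul,
      single_mul_single_of_ne (1:ℍ[ℝ]) i i j hij (star u),
      single_mul_single_of_ne u i j i (Ne.symm hij) (1:ℍ[ℝ]),
      single_mul_single_same, mul_one]
    module
  rw [e]; exact h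

lemma pairProd (i j : Fin 3) (hij : i ≠ j) (a b : ℍ[ℝ]) :
    (single i j a + single j i (star a)) *
      (single i j b + single j i (star b))
    = single i i (a * star b) + single j j (star a * b) := by
  rw [mul_add, add_mul, add_mul, single_mul_single_same, single_mul_single_same,
    single_mul_single_of_ne a i j i (Ne.symm hij) b,
    single_mul_single_of_ne (star a) j i j hij (star b)]
  module

lemma diag_mem (i j : Fin 3) (hij : i ≠ j) (v a b : ℍ[ℝ])
    (hv : star v = -v)
    (hab1 : a * star b = b * star a - (v + v))
    (hab2 : star a * b = star b * a - (v + v)) :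
    rho (single i i v) ∈ StrH3 := by
  have hC1 := comm_mem _ _ (herm_pair i j (1:ℍ[ℝ])) (herm_pair i j v)
  have hC2 := comm_mem _ _ (herm_pair i j a) (herm_pair i j b)
  rw [pairProd i j hij, pairProd i j hij] at hC1 hC2
  have h := smul_mem' (-((1:ℝ)/4)) (add_mem' hC1 hC2)
  have e : single i i v = (-((1:ℝ)/4)) •
      ((single i i ((1:ℍ[ℝ]) * star v) + single j j (star (1:ℍ[ℝ]) * v) -
        (single i i (v * star 1) + single j j (star v * 1))) +
       (single i i (a * star b) + single j j (star a * b) -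
        (single i i (b * star a) + single j j (star b * a)))) := by
    rw [hab1, hab2, hv, star_one, one_mul, one_mul, mul_one, mul_one]
    refine Matrix.ext fun p q => ?_
    simp only [Matrix.smul_apply, Matrix.add_apply, Matrix.sub_apply, single, of_apply]
    by_cases h1 : i = p <;> by_cases h2 : i = q <;> by_cases h3 : j = p <;>
      by_cases h4 : j = q <;> simp_all <;> module
  rw [e]; exact h

end Aux5
section Aux6
open Matrix

lemma quat_ids :
    star qI = -qI ∧ star qJ = -qJ ∧ star qK = -qK
    ∧ (qJ * star qK = qK * star qJ - (qI + qI) ∧ star qJ * qK = star qK * qJ - (qI + qI))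
    ∧ (qK * star qI = qI * star qK - (qJ + qJ) ∧ star qK * qI = star qI * qK - (qJ + qJ))
    ∧ (qI * star qJ = qJ * star qI - (qK + qK) ∧ star qI * qJ = star qJ * qI - (qK + qK)) := by
  refine ⟨?_, ?_, ?_, ⟨?_, ?_⟩, ⟨?_, ?_⟩, ⟨?_, ?_⟩⟩ <;>
    · ext <;>
        simp [Quaternion.re_mul, Quaternion.imI_mul, Quaternion.imJ_mul,
          Quaternion.imK_mul] <;> simp [qI, qJ, qK]

lemma quat_decomp (u : ℍ[ℝ]) :
    u = u.re • (1:ℍ[ℝ]) + u.imI • qI + u.imJ • qJ + u.imK • qK := by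
  ext <;> simp <;> simp [qI, qJ, qK]

lemma sbm_mem (i j : Fin 3) (u : ℍ[ℝ]) : rho (single i j u) ∈ StrH3 := by
  rcases eq_or_ne i j with rfl | hij
  · obtain ⟨q1, q2, q3, ⟨qa1, qa2⟩, ⟨qb1, qb2⟩, ⟨qc1, qc2⟩⟩ := quat_ids
    obtain ⟨k, hk⟩ : ∃ k, i ≠ k := by
      refine ⟨if i = 0 then 1 else 0, ?_⟩
      by_cases h : i = 0 <;> simp [h]
    have m1 : rho (single i i (1:ℍ[ℝ])) ∈ StrH3 := herm_mem _ (herm_diag i)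
    have mI := diag_mem i k hk qI qJ qK q1 qa1 qa2
    have mJ := diag_mem i k hk qJ qK qI q2 qb1 qb2
    have mK := diag_mem i k hk qK qI qJ q3 qc1 qc2
    have e : single i i u
        = u.re • single i i (1:ℍ[ℝ]) + u.imI • single i i qI
          + u.imJ • single i i qJ + u.imK • single i i qK := by
      rw [smul_single, smul_single, smul_single, smul_single,
        ← single_add, ← single_add, ← single_add]
      exact congrArg _ (quat_decomp u)
    rw [e]
    exact add_mem' (add_mem' (add_mem' (smul_mem' _ m1) (smul_mem' _ mI))
      (smul_mem' _ mJ)) (smul_mem' _ mK)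
  · exact offdiag_mem i j hij u

noncomputable def rhoL : M3 →ₗ[ℝ] Module.End ℝ herm3H where
  toFun := rho
  map_add' := rho_add
  map_smul' := rho_smul

lemma rho_mem_str (X : M3) : rho X ∈ StrH3 := by
  have hX := matrix_eq_sum_single X
  show rhoL X ∈ StrH3
  rw [hX, map_sum]
  refine sum_mem fun a _ => ?_
  rw [map_sum]
  exact sum_mem fun b _ => sbm_mem a b (X a b)

lemma str_eq_range : (StrH3 : Set (Module.End ℝ herm3H)) = Set.range rho := by
  apply Set.Subset.antisymm
  · intro z hz
    exact str_le_range hz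
  · rintro - ⟨X, rfl⟩
    exact rho_mem_str X

lemma rho_scalar (c : ℝ) :
    rho (c • (1:M3)) = (2 * c) • (1 : Module.End ℝ herm3H) := by
  refine LinearMap.ext fun H => Subtype.ext ?_
  show (c • (1:M3)) * H.1 + H.1 * (c • (1:M3))ᴴ = (2 * c) • H.1
  rw [conjTranspose_smul, star_trivial, conjTranspose_one, smul_mul_assoc, mul_smul_comm,
    one_mul, mul_one]
  module

lemma trace_re_smul_one (c : ℝ) : ((c • (1:M3)).trace).re = 3 * c := by
  rw [trace_smul, trace_one]
  have h3 : (Fintype.card (Fin 3) : ℍ[ℝ]) = ((3:ℕ) : ℍ[ℝ]) := by norm_num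
  rw [h3, Quaternion.re_smul, Quaternion.re_natCast, smul_eq_mul]
  push_cast
  ring

end Aux6
/-- `ρ(X)(H) = XH + HXᴴ` (i) maps hermitian matrices to hermitian matrices; (ii) is an
injective homomorphism of real Lie algebras from `gl(3,ℍ) = M₃(ℍ)` into the
endomorphisms of `H₃(ℍ)`; (iii) has image exactly the structure algebra of `H₃(ℍ)`
(the Lie algebra generated by the Jordan multiplications `L_A`); and (iv) the structure
algebra is the internal direct sum of `ℝ·id` and `ρ(sl(3,ℍ))`. -/
theorem statement19 :
    (∀ (X H : Matrix (Fin 3) (Fin 3) ℍ[ℝ]), Hᴴ = H →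
        (X * H + H * Xᴴ)ᴴ = X * H + H * Xᴴ)
    ∧ (Function.Injective rho
        ∧ (∀ X Y, rho (X + Y) = rho X + rho Y)
        ∧ (∀ (r : ℝ) X, rho (r • X) = r • rho X)
        ∧ (∀ X Y, rho (X * Y - Y * X) = rho X * rho Y - rho Y * rho X))
    ∧ ((StrH3 : Set (Module.End ℝ herm3H)) = Set.range rho)
    ∧ (∀ D : Module.End ℝ herm3H, D ∈ StrH3 ↔
        ∃! p : ℝ × Matrix (Fin 3) (Fin 3) ℍ[ℝ],
          (p.2.trace).re = 0 ∧ D = p.1 • (1 : Module.End ℝ herm3H) + rho p.2) := by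
  refine ⟨?_, ⟨rho_inj, rho_add, rho_smul, rho_bracket⟩, str_eq_range, ?_⟩
  · intro X H hH
    rw [conjTranspose_add, conjTranspose_mul, conjTranspose_mul,
      conjTranspose_conjTranspose, hH, add_comm]
  · intro D
    constructor
    · intro hD
      have hD' : D ∈ Set.range rho := by rw [← str_eq_range]; exact hD
      obtain ⟨X, rfl⟩ := hD'
      set c : ℝ := (X.trace.re) / 3 with hc
      refine ⟨(2 * c, X - c • 1), ⟨?_, ?_⟩, ?_⟩
      · show ((X - c • (1:M3)).trace).re = 0
        rw [trace_sub, Quaternion.re_sub, trace_re_smul_one, hc]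
        ring
      · show rho X = (2 * c) • 1 + rho (X - c • (1:M3))
        have e : X = c • (1:M3) + (X - c • 1) := by abel
        conv_lhs => rw [e]
        rw [rho_add, rho_scalar]
      · rintro ⟨r, Y⟩ ⟨h1, h2⟩
        simp only at h1 h2
        have e : rho (Y + (r/2) • 1) = rho X := by
          rw [rho_add, rho_scalar, h2]
          have : 2 * (r/2) = r := by ring
          rw [this, add_comm]
        have eX : Y + (r/2) • (1:M3) = X := rho_inj e
        have ht : (X.trace).re = 3 * (r/2) := by
          rw [← eX, trace_add, Quaternion.re_add, h1, trace_re_smul_one]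
          ring
        have hcr : c = r / 2 := by rw [hc, ht]; ring
        have hY : Y = X - c • (1:M3) := by rw [hcr, ← eX]; abel
        have hr : r = 2 * c := by rw [hcr]; ring
        rw [Prod.ext_iff]
        exact ⟨hr, hY⟩
    · rintro ⟨⟨r, Y⟩, ⟨h1, h2⟩, -⟩
      simp only at h1 h2
      have e : D = rho ((r/2) • 1 + Y) := by
        rw [rho_add, rho_scalar, h2]
        have : 2 * (r/2) = r := by ring
        rw [this]
      rw [e]
      exact rho_mem_str _
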